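/- Let S ∈ ℝ^{r×k}, T ∈ ℝ^{(d−r)×k}, D* ∈ ℝ^{r×r} symmetric positive definite with ‖D*‖ = σ₁ and smallest eigenvalue σᵣ. Suppose γ ≤ 0.01/σ₁, ‖S‖ ≤ 2√σ₁, σᵣ(S) ≥ √(σᵣ/2), and ‖T‖ ≤ 0.1√σᵣ. Define M(S) = S − γ(S SᵀS + S TᵀT − D*S). Then ‖D* − M(S)Sᵀ‖ ≤ (1 − γσᵣ/2)‖D* − S Sᵀ‖ + γ‖S Tᵀ‖², where ‖·‖ is the spectral norm and σᵣ(S) the r-th largest singular value of S. -/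

import Mathlib

open Matrix

/-- Spectral (operator) norm of a real matrix, via the induced Euclidean operator norm. -/
noncomputable def specNorm {m n : ℕ} (A : Matrix (Fin m) (Fin n) ℝ) : ℝ :=
  ‖(Matrix.toEuclideanLin (𝕜 := ℝ) A).toContinuousLinearMap‖

/-- Singular values of a real matrix: square roots of the eigenvalues of `A * Aᵀ`. -/
noncomputable def sv {m n : ℕ} (A : Matrix (Fin m) (Fin n) ℝ) (i : Fin m) : ℝ :=
  Real.sqrt ((Matrix.isHermitian_mul_conjTranspose_self A).eigenvalues i)

/-- For an `r × k` matrix, the `r`-th largest (i.e. smallest) singular value. -/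
noncomputable def sigmaR {r k : ℕ} (hr : 0 < r) (A : Matrix (Fin r) (Fin k) ℝ) : ℝ :=
  Finset.univ.inf' ⟨⟨0, hr⟩, Finset.mem_univ _⟩ (sv A)

open scoped Matrix.Norms.L2Operator

lemma specNorm_eq {m n : ℕ} (A : Matrix (Fin m) (Fin n) ℝ) : specNorm A = ‖A‖ := rfl

lemma dot_self_eq_norm_sq {n : ℕ} (x : Fin n → ℝ) :
    x ⬝ᵥ x = ‖(WithLp.equiv 2 (Fin n → ℝ)).symm x‖ ^ 2 := by
  rw [← real_inner_self_eq_norm_sq, PiLp.inner_apply]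
  simp [dotProduct, sq]

lemma abs_eigenvalue_le_norm {n : ℕ} {A : Matrix (Fin n) (Fin n) ℝ} (hA : A.IsHermitian)
    (i : Fin n) : |hA.eigenvalues i| ≤ ‖A‖ := by
  have hv := hA.mulVec_eigenvectorBasis i
  have hnv : ‖hA.eigenvectorBasis i‖ = 1 := hA.eigenvectorBasis.orthonormal.1 i
  have h := A.l2_opNorm_mulVec (hA.eigenvectorBasis i)
  rw [hnv, mul_one] at h
  calc |hA.eigenvalues i|
      = ‖(EuclideanSpace.equiv (Fin n) ℝ).symm (A *ᵥ ⇑(hA.eigenvectorBasis i))‖ := by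
        rw [hv]
        have : (EuclideanSpace.equiv (Fin n) ℝ).symm (hA.eigenvalues i • ⇑(hA.eigenvectorBasis i))
            = hA.eigenvalues i • (hA.eigenvectorBasis i) := rfl
        rw [this, norm_smul, hnv, mul_one, Real.norm_eq_abs]
    _ ≤ ‖A‖ := h

lemma psd_smul {n : ℕ} {A : Matrix (Fin n) (Fin n) ℝ} (hA : A.PosSemidef) {c : ℝ} (hc : 0 ≤ c) :
    (c • A).PosSemidef := by
  refine Matrix.posSemidef_iff_dotProduct_mulVec.mpr ⟨?_, ?_⟩
  · unfold Matrix.IsHermitian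
    rw [conjTranspose_smul, hA.1]
    simp
  · intro x
    rw [smul_mulVec, dotProduct_smul]
    exact mul_nonneg hc (hA.dotProduct_mulVec_nonneg x)

lemma sub_smul_one_psd {n : ℕ} {A : Matrix (Fin n) (Fin n) ℝ} (hA : A.IsHermitian) {t : ℝ}
    (h : ∀ i, t ≤ hA.eigenvalues i) : (A - t • 1).PosSemidef := by
  have hdiag : A - t • (1 : Matrix (Fin n) (Fin n) ℝ) =
      (hA.eigenvectorUnitary : Matrix (Fin n) (Fin n) ℝ) *
        diagonal (fun i => hA.eigenvalues i - t) *
        (hA.eigenvectorUnitary : Matrix (Fin n) (Fin n) ℝ)ᴴ := by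
    have hU : (hA.eigenvectorUnitary : Matrix (Fin n) (Fin n) ℝ) *
        star (hA.eigenvectorUnitary : Matrix (Fin n) (Fin n) ℝ) = 1 :=
      (Matrix.mem_unitaryGroup_iff).mp hA.eigenvectorUnitary.2
    have : diagonal (fun i => hA.eigenvalues i - t) =
        diagonal (RCLike.ofReal ∘ hA.eigenvalues) - t • (1 : Matrix (Fin n) (Fin n) ℝ) := by
      rw [smul_one_eq_diagonal, ← diagonal_sub]
      rfl
    rw [this, mul_sub, sub_mul, ← Matrix.star_eq_conjTranspose,
      ← Unitary.conjStarAlgAut_apply (S := ℝ) _ (diagonal (RCLike.ofReal ∘ hA.eigenvalues)),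
      ← hA.spectral_theorem]
    congr 1
    rw [Matrix.mul_smul, Matrix.mul_one, Matrix.smul_mul, hU]
  rw [hdiag]
  exact (Matrix.PosSemidef.diagonal (fun i => sub_nonneg.mpr (h i))).mul_mul_conjTranspose_same _

lemma smul_one_sub_psd {n : ℕ} {A : Matrix (Fin n) (Fin n) ℝ} (hA : A.IsHermitian) {t : ℝ}
    (h : ∀ i, hA.eigenvalues i ≤ t) : (t • 1 - A).PosSemidef := by
  have hdiag : t • (1 : Matrix (Fin n) (Fin n) ℝ) - A =
      (hA.eigenvectorUnitary : Matrix (Fin n) (Fin n) ℝ) *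
        diagonal (fun i => t - hA.eigenvalues i) *
        (hA.eigenvectorUnitary : Matrix (Fin n) (Fin n) ℝ)ᴴ := by
    have hU : (hA.eigenvectorUnitary : Matrix (Fin n) (Fin n) ℝ) *
        star (hA.eigenvectorUnitary : Matrix (Fin n) (Fin n) ℝ) = 1 :=
      (Matrix.mem_unitaryGroup_iff).mp hA.eigenvectorUnitary.2
    have : diagonal (fun i => t - hA.eigenvalues i) =
        t • (1 : Matrix (Fin n) (Fin n) ℝ) - diagonal (RCLike.ofReal ∘ hA.eigenvalues) := by
      rw [smul_one_eq_diagonal, ← diagonal_sub]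
      rfl
    rw [this, mul_sub, sub_mul, ← Matrix.star_eq_conjTranspose,
      ← Unitary.conjStarAlgAut_apply (S := ℝ) _ (diagonal (RCLike.ofReal ∘ hA.eigenvalues)),
      ← hA.spectral_theorem]
    congr 1
    rw [Matrix.mul_smul, Matrix.mul_one, Matrix.smul_mul, hU]
  rw [hdiag]
  exact (Matrix.PosSemidef.diagonal (fun i => sub_nonneg.mpr (h i))).mul_mul_conjTranspose_same _

lemma norm_le_of_psd {n : ℕ} {B : Matrix (Fin n) (Fin n) ℝ} {c : ℝ} (hc : 0 ≤ c)
    (hB : B.PosSemidef) (h2 : (c • 1 - B).PosSemidef) : ‖B‖ ≤ c := by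
  obtain ⟨A, hAB⟩ : ∃ A : Matrix (Fin n) (Fin n) ℝ, B = Aᴴ * A := by
    open scoped MatrixOrder in
    exact CStarAlgebra.nonneg_iff_eq_star_mul_self.mp (Matrix.nonneg_iff_posSemidef.mpr hB)
  have key : ∀ x : Fin n → ℝ, (A *ᵥ x) ⬝ᵥ (A *ᵥ x) ≤ c * (x ⬝ᵥ x) := by
    intro x
    have hq := h2.dotProduct_mulVec_nonneg x
    have hform : x ⬝ᵥ ((c • 1 - B) *ᵥ x) = c * (x ⬝ᵥ x) - (A *ᵥ x) ⬝ᵥ (A *ᵥ x) := by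
      rw [hAB]
      rw [Matrix.sub_mulVec, dotProduct_sub, Matrix.smul_mulVec, Matrix.one_mulVec,
        dotProduct_smul]
      congr 1
      rw [← Matrix.mulVec_mulVec, Matrix.conjTranspose_eq_transpose_of_trivial,
        Matrix.mulVec_transpose, dotProduct_comm, Matrix.dotProduct_mulVec]
    simp only [star_trivial] at hq
    rw [hform] at hq
    linarith
  have hAn : ‖A‖ ≤ Real.sqrt c := by
    rw [Matrix.l2_opNorm_def]
    apply ContinuousLinearMap.opNorm_le_bound _ (Real.sqrt_nonneg c)
    intro x
    have h1 : ‖((Matrix.toEuclideanLin (𝕜 := ℝ) (m := Fin n) (n := Fin n)).trans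
          LinearMap.toContinuousLinearMap A) x‖ ^ 2
        = (A *ᵥ (WithLp.equiv 2 (Fin n → ℝ) x)) ⬝ᵥ (A *ᵥ (WithLp.equiv 2 (Fin n → ℝ) x)) := by
      rw [dot_self_eq_norm_sq]
      rfl
    have h2' := key (WithLp.equiv 2 (Fin n → ℝ) x)
    rw [← h1] at h2'
    have hx : (WithLp.equiv 2 (Fin n → ℝ) x) ⬝ᵥ (WithLp.equiv 2 (Fin n → ℝ) x) = ‖x‖ ^ 2 := by
      rw [dot_self_eq_norm_sq]; rfl
    rw [hx] at h2'
    have h3 := Real.sqrt_le_sqrt h2'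
    rw [Real.sqrt_sq (norm_nonneg _), Real.sqrt_mul hc, Real.sqrt_sq (norm_nonneg _)] at h3
    exact h3
  calc ‖B‖ = ‖A‖ * ‖A‖ := by rw [hAB]; exact Matrix.l2_opNorm_conjTranspose_mul_self A
    _ ≤ Real.sqrt c * Real.sqrt c :=
        mul_le_mul hAn hAn (norm_nonneg A) (Real.sqrt_nonneg c)
    _ = c := Real.mul_self_sqrt hc

/-- For `M(S) = S - γ (S Sᵀ S + S Tᵀ T - D* S)`, under the stated conditions,
`‖D* - M(S) Sᵀ‖ ≤ (1 - γ σᵣ / 2) ‖D* - S Sᵀ‖ + γ ‖S Tᵀ‖²`. -/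
theorem stmt19 {d r k : ℕ} (hr : 0 < r)
    (S : Matrix (Fin r) (Fin k) ℝ) (T : Matrix (Fin (d - r)) (Fin k) ℝ)
    (D : Matrix (Fin r) (Fin r) ℝ) (hD : D.PosDef)
    (σ₁ σᵣ γ : ℝ)
    (hσ₁ : specNorm D = σ₁)
    (hσᵣ : Finset.univ.inf' ⟨⟨0, hr⟩, Finset.mem_univ _⟩ hD.isHermitian.eigenvalues = σᵣ)
    (hγpos : 0 < γ) (hγ : γ ≤ 0.01 / σ₁)
    (hSnorm : specNorm S ≤ 2 * Real.sqrt σ₁)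
    (hSmin : Real.sqrt (σᵣ / 2) ≤ sigmaR hr S)
    (hT : specNorm T ≤ 0.1 * Real.sqrt σᵣ)
    (M : Matrix (Fin r) (Fin k) ℝ)
    (hM : M = S - γ • (S * Sᵀ * S + S * Tᵀ * T - D * S)) :
    specNorm (D - M * Sᵀ) ≤
      (1 - γ * σᵣ / 2) * specNorm (D - S * Sᵀ) + γ * specNorm (S * Tᵀ) ^ 2 := by
  have htS : Sᴴ = Sᵀ := Matrix.conjTranspose_eq_transpose_of_trivial S
  have htT : Tᴴ = Tᵀ := Matrix.conjTranspose_eq_transpose_of_trivial T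
  rw [← htS, ← htT] at hM ⊢
  -- basic positivity facts
  have hσ₁pos : 0 < σ₁ := by
    by_contra hcon
    push_neg at hcon
    have : (0.01 : ℝ) / σ₁ ≤ 0 := div_nonpos_of_nonneg_of_nonpos (by norm_num) hcon
    linarith
  have hγσ₁ : γ * σ₁ ≤ 0.01 := (le_div_iff₀ hσ₁pos).mp hγ
  have hσᵣpos : 0 < σᵣ := by
    rw [← hσᵣ]
    exact (Finset.lt_inf'_iff _).mpr fun i _ => hD.eigenvalues_pos i
  set H : (S * Sᴴ).IsHermitian := Matrix.isHermitian_mul_conjTranspose_self S with hHdef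
  have hevnn : ∀ i, 0 ≤ H.eigenvalues i := fun i =>
    (Matrix.posSemidef_self_mul_conjTranspose S).eigenvalues_nonneg i
  -- lower eigenvalue bound
  have hlow : ∀ i, σᵣ / 2 ≤ H.eigenvalues i := by
    intro i
    have h1 : Real.sqrt (σᵣ / 2) ≤ Real.sqrt (H.eigenvalues i) :=
      le_trans hSmin (Finset.inf'_le _ (Finset.mem_univ i))
    calc σᵣ / 2 = Real.sqrt (σᵣ / 2) ^ 2 := (Real.sq_sqrt (by positivity)).symm
      _ ≤ Real.sqrt (H.eigenvalues i) ^ 2 := by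
          exact pow_le_pow_left₀ (Real.sqrt_nonneg _) h1 2
      _ = H.eigenvalues i := Real.sq_sqrt (hevnn i)
  -- upper eigenvalue bound
  have hSn : ‖S‖ ≤ 2 * Real.sqrt σ₁ := hSnorm
  have hGn : ‖S * Sᴴ‖ ≤ 4 * σ₁ := by
    have h1 : ‖S * Sᴴ‖ = ‖Sᴴ‖ * ‖Sᴴ‖ := by
      have := Matrix.l2_opNorm_conjTranspose_mul_self Sᴴ
      rwa [Matrix.conjTranspose_conjTranspose] at this
    rw [h1, Matrix.l2_opNorm_conjTranspose]
    have h2 : (2 * Real.sqrt σ₁) * (2 * Real.sqrt σ₁) = 4 * σ₁ := by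
      have := Real.mul_self_sqrt hσ₁pos.le
      nlinarith
    calc ‖S‖ * ‖S‖ ≤ (2 * Real.sqrt σ₁) * (2 * Real.sqrt σ₁) :=
          mul_le_mul hSn hSn (norm_nonneg _) (by positivity)
      _ = 4 * σ₁ := h2
  have hup : ∀ i, H.eigenvalues i ≤ 4 * σ₁ := fun i =>
    le_trans (le_trans (le_abs_self _) (abs_eigenvalue_le_norm H i)) hGn
  have hσᵣle : σᵣ / 2 ≤ 4 * σ₁ := le_trans (hlow ⟨0, hr⟩) (hup ⟨0, hr⟩)
  -- the contraction factor
  set B : Matrix (Fin r) (Fin r) ℝ := 1 - γ • (S * Sᴴ) with hBdef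
  have hBpsd : B.PosSemidef := by
    have hB' : B = γ • (γ⁻¹ • (1 : Matrix (Fin r) (Fin r) ℝ) - S * Sᴴ) := by
      rw [smul_sub, smul_smul, mul_inv_cancel₀ hγpos.ne']
      rw [hBdef, one_smul]
    rw [hB']
    refine psd_smul ?_ hγpos.le
    refine smul_one_sub_psd H fun i => le_trans (hup i) ?_
    rw [← one_div]
    rw [le_div_iff₀ hγpos]
    nlinarith
  have hc : 0 ≤ 1 - γ * σᵣ / 2 := by nlinarith
  have h2psd : ((1 - γ * σᵣ / 2) • (1 : Matrix (Fin r) (Fin r) ℝ) - B).PosSemidef := by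
    have he : (1 - γ * σᵣ / 2) • (1 : Matrix (Fin r) (Fin r) ℝ) - B
        = γ • (S * Sᴴ - (σᵣ / 2) • 1) := by
      rw [hBdef]
      module
    rw [he]
    exact psd_smul (sub_smul_one_psd H hlow) hγpos.le
  have hBn : ‖B‖ ≤ 1 - γ * σᵣ / 2 := norm_le_of_psd hc hBpsd h2psd
  -- key algebraic identity
  have hkey : D - M * Sᴴ = (D - S * Sᴴ) * B + γ • ((S * Tᴴ) * (S * Tᴴ)ᴴ) := by
    subst hM
    rw [hBdef]
    simp only [Matrix.sub_mul, Matrix.add_mul, Matrix.smul_mul, Matrix.mul_smul,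
      Matrix.mul_sub, Matrix.mul_add, Matrix.mul_one, Matrix.conjTranspose_mul,
      Matrix.conjTranspose_conjTranspose, Matrix.mul_assoc, smul_sub, smul_add]
    abel
  -- norm of the squared cross term
  have hY : ‖(S * Tᴴ) * (S * Tᴴ)ᴴ‖ = ‖S * Tᴴ‖ ^ 2 := by
    have := Matrix.l2_opNorm_conjTranspose_mul_self (S * Tᴴ)ᴴ
    rw [Matrix.conjTranspose_conjTranspose, Matrix.l2_opNorm_conjTranspose] at this
    rw [this, sq]
  -- final assembly
  simp only [specNorm_eq]
  rw [hkey]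
  calc ‖(D - S * Sᴴ) * B + γ • ((S * Tᴴ) * (S * Tᴴ)ᴴ)‖
      ≤ ‖(D - S * Sᴴ) * B‖ + ‖γ • ((S * Tᴴ) * (S * Tᴴ)ᴴ)‖ := norm_add_le _ _
    _ ≤ ‖D - S * Sᴴ‖ * ‖B‖ + γ * ‖S * Tᴴ‖ ^ 2 := by
        gcongr
        · exact Matrix.l2_opNorm_mul _ _
        · rw [norm_smul, Real.norm_eq_abs, abs_of_pos hγpos, hY]
    _ ≤ (1 - γ * σᵣ / 2) * ‖D - S * Sᴴ‖ + γ * ‖S * Tᴴ‖ ^ 2 := by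
        have := mul_le_mul_of_nonneg_left hBn (norm_nonneg (D - S * Sᴴ))
        rw [mul_comm (1 - γ * σᵣ / 2)]
        linarith
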